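/- The independent domination stability of the book graph B_n = K_{1,n} □ P_2 equals 2. -/

import Mathlib

open SimpleGraph

/-- `S` is an independent dominating set of `G`. -/
def SimpleGraph.IsIndepDomSet {V : Type*} (G : SimpleGraph V) (S : Set V) : Prop :=
  (S.Pairwise fun u v => ¬ G.Adj u v) ∧ ∀ v ∉ S, ∃ u ∈ S, G.Adj v u

/-- The independent domination number `γᵢ(G)`. -/
noncomputable def indepDomNum (V : Type*) [Fintype V] (G : SimpleGraph V) : ℕ :=
  sInf {n | ∃ S : Finset V, G.IsIndepDomSet ↑S ∧ S.card = n}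

/-- The independent domination stability `st_id(G)`: the minimum number of
vertices whose removal changes the independent domination number. -/
noncomputable def idStability (V : Type*) [Fintype V] [DecidableEq V]
    (G : SimpleGraph V) : ℕ :=
  sInf {k | ∃ A : Finset V, A.card = k ∧ A.Nonempty ∧
    indepDomNum _ (G.induce (↑(Aᶜ) : Set V)) ≠ indepDomNum V G}

namespace BookAux

abbrev BV (n : ℕ) := (Fin 1 ⊕ Fin n) × Fin 2
abbrev BG (n : ℕ) : SimpleGraph (BV n) := (completeBipartiteGraph (Fin 1) (Fin n)) □ (pathGraph 2)

variable {n : ℕ}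

lemma adj_cc {a b : Fin 1} {s t : Fin 2} : (BG n).Adj (Sum.inl a, s) (Sum.inl b, t) ↔ s ≠ t := by
  obtain rfl : a = b := Subsingleton.elim a b
  simp [boxProd_adj, pathGraph_two_eq_top]

lemma adj_cl {a : Fin 1} {i : Fin n} {s t : Fin 2} :
    (BG n).Adj (Sum.inl a, s) (Sum.inr i, t) ↔ s = t := by
  simp [boxProd_adj, pathGraph_two_eq_top]

lemma adj_lc {a : Fin 1} {i : Fin n} {s t : Fin 2} :
    (BG n).Adj (Sum.inr i, s) (Sum.inl a, t) ↔ s = t := by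
  simp [boxProd_adj, pathGraph_two_eq_top]

lemma adj_ll {i j : Fin n} {s t : Fin 2} :
    (BG n).Adj (Sum.inr i, s) (Sum.inr j, t) ↔ i = j ∧ s ≠ t := by
  simp [boxProd_adj, pathGraph_two_eq_top, and_comm, eq_comm]

lemma indepDomNum_le {V : Type*} [Fintype V] {G : SimpleGraph V} {m : ℕ}
    (S : Finset V) (hS : G.IsIndepDomSet ↑S) (hcard : S.card = m) :
    indepDomNum V G ≤ m :=
  Nat.sInf_le ⟨S, hS, hcard⟩

lemma indepDomNum_eq {V : Type*} [Fintype V] {G : SimpleGraph V} {m : ℕ}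
    (S : Finset V) (hS : G.IsIndepDomSet ↑S) (hcard : S.card = m)
    (hlb : ∀ T : Finset V, G.IsIndepDomSet ↑T → m ≤ T.card) :
    indepDomNum V G = m := by
  refine le_antisymm (indepDomNum_le S hS hcard) (le_csInf ⟨m, S, hS, hcard⟩ ?_)
  rintro k ⟨T, hT, rfl⟩
  exact hlb T hT

lemma isIndepDomSet_of {V : Type*} {G : SimpleGraph V} (S0 : Finset V)
    (hind : ∀ u ∈ S0, ∀ v ∈ S0, u ≠ v → ¬ G.Adj u v)
    (hdom : ∀ v, v ∉ S0 → ∃ u ∈ S0, G.Adj v u) : G.IsIndepDomSet ↑S0 := by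
  constructor
  · intro u hu v hv hne
    exact hind u (Finset.mem_coe.1 hu) v (Finset.mem_coe.1 hv) hne
  · intro v hv
    obtain ⟨u, hu, ha⟩ := hdom v (fun h => hv (Finset.mem_coe.2 h))
    exact ⟨u, Finset.mem_coe.2 hu, ha⟩

/-- build an indep dom set of the induced graph from V-level data -/
lemma isIndepDomSet_induce {V : Type*} [Fintype V] [DecidableEq V] {G : SimpleGraph V}
    {s : Set V} (S0 : Finset V) (hs : ∀ v ∈ S0, v ∈ s)
    (hind : ∀ u ∈ S0, ∀ v ∈ S0, u ≠ v → ¬ G.Adj u v)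
    (hdom : ∀ v ∈ s, v ∉ S0 → ∃ u ∈ S0, u ∈ s ∧ G.Adj v u) :
    ∃ S : Finset s, (G.induce s).IsIndepDomSet ↑S ∧ S.card = S0.card := by
  classical
  refine ⟨S0.attach.image (fun v => ⟨v.1, hs v.1 v.2⟩), ⟨?_, ?_⟩, ?_⟩
  · rintro ⟨u, hu⟩ huS ⟨v, hv⟩ hvS hne
    simp only [Finset.coe_image, Set.mem_image, Finset.mem_coe, Finset.mem_attach,
      true_and, Subtype.exists, Finset.mem_attach] at huS hvS
    obtain ⟨u', hu', he⟩ := huS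
    obtain ⟨v', hv', he'⟩ := hvS
    have hu0 : u ∈ S0 := by cases he; exact hu'
    have hv0 : v ∈ S0 := by cases he'; exact hv'
    exact hind u hu0 v hv0 (fun h => hne (Subtype.ext h))
  · rintro ⟨v, hv⟩ hvS
    have hv0 : v ∉ S0 := by
      intro h
      apply hvS
      simp only [Finset.coe_image, Set.mem_image, Finset.mem_coe]
      exact ⟨⟨v, h⟩, Finset.mem_attach _ _, rfl⟩
    obtain ⟨u, huS0, hus, hadj⟩ := hdom v hv hv0
    refine ⟨⟨u, hus⟩, ?_, hadj⟩
    simp only [Finset.coe_image, Set.mem_image, Finset.mem_coe]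
    exact ⟨⟨u, huS0⟩, Finset.mem_attach _ _, rfl⟩
  · have hinj : Function.Injective (fun v : {x // x ∈ S0} => (⟨v.1, hs v.1 v.2⟩ : s)) := by
      intro a b h
      exact Subtype.ext (Subtype.mk_eq_mk.1 h)
    rw [Finset.card_image_of_injective _ hinj, Finset.card_attach]

/-- extract V-level data from an indep dom set of the induced graph -/
lemma of_isIndepDomSet_induce {V : Type*} [Fintype V] [DecidableEq V] {G : SimpleGraph V}
    {s : Set V} (T : Finset s) (h : (G.induce s).IsIndepDomSet ↑T) :
    ∃ T0 : Finset V, T0.card = T.card ∧ (∀ v ∈ T0, v ∈ s) ∧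
      (∀ u ∈ T0, ∀ v ∈ T0, u ≠ v → ¬ G.Adj u v) ∧
      (∀ v ∈ s, v ∉ T0 → ∃ u ∈ T0, G.Adj v u) := by
  classical
  refine ⟨T.image Subtype.val, Finset.card_image_of_injective _ Subtype.val_injective, ?_, ?_, ?_⟩
  · intro v hv
    obtain ⟨w, _, rfl⟩ := Finset.mem_image.1 hv
    exact w.2
  · intro u hu v hv hne
    obtain ⟨w1, hw1, rfl⟩ := Finset.mem_image.1 hu
    obtain ⟨w2, hw2, rfl⟩ := Finset.mem_image.1 hv
    exact h.1 (Finset.mem_coe.2 hw1) (Finset.mem_coe.2 hw2) (fun he => hne (congrArg _ he))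
  · intro v hvs hv
    have hnot : (⟨v, hvs⟩ : s) ∉ (↑T : Set s) := by
      intro hmem
      exact hv (Finset.mem_image.2 ⟨⟨v, hvs⟩, Finset.mem_coe.1 hmem, rfl⟩)
    obtain ⟨u, huT, hadj⟩ := h.2 _ hnot
    exact ⟨↑u, Finset.mem_image.2 ⟨u, Finset.mem_coe.1 huT, rfl⟩, hadj⟩

/-- Key pair lemma: if both copies of leaf `i` survive, one of them is in `T0`. -/
lemma pair_mem {s : Set (BV n)} {T0 : Finset (BV n)}
    (hind : ∀ u ∈ T0, ∀ v ∈ T0, u ≠ v → ¬ (BG n).Adj u v)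
    (hdom : ∀ v ∈ s, v ∉ T0 → ∃ u ∈ T0, (BG n).Adj v u)
    {i : Fin n} (h0 : ((Sum.inr i, (0 : Fin 2)) : BV n) ∈ s)
    (h1 : ((Sum.inr i, (1 : Fin 2)) : BV n) ∈ s) :
    ((Sum.inr i, (0 : Fin 2)) : BV n) ∈ T0 ∨ ((Sum.inr i, (1 : Fin 2)) : BV n) ∈ T0 := by
  by_contra hcon
  push_neg at hcon
  obtain ⟨hc0, hc1⟩ := hcon
  have hno : ∀ t : Fin 2, ((Sum.inr i, t) : BV n) ∉ T0 := by
    intro t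
    fin_cases t
    · exact hc0
    · exact hc1
  have hcenter : ∀ t : Fin 2, ((Sum.inr i, t) : BV n) ∈ s → ((Sum.inl 0, t) : BV n) ∈ T0 := by
    intro t hst
    obtain ⟨u, huT, hadj⟩ := hdom _ hst (hno t)
    obtain ⟨a | j, t'⟩ := u
    · rw [adj_lc] at hadj
      obtain rfl : a = (0 : Fin 1) := Subsingleton.elim _ _
      rwa [← hadj] at huT
    · rw [adj_ll] at hadj
      obtain ⟨rfl, -⟩ := hadj
      exact absurd huT (hno t')
  have hm0 := hcenter 0 h0
  have hm1 := hcenter 1 h1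
  exact hind _ hm0 _ hm1 (by simp) (adj_cc.2 (by decide))

lemma card_ge_of_pairs {T0 : Finset (BV n)}
    (key : ∀ i : Fin n, ((Sum.inr i, (0 : Fin 2)) : BV n) ∈ T0 ∨
      ((Sum.inr i, (1 : Fin 2)) : BV n) ∈ T0) :
    n ≤ T0.card := by
  classical
  set f : Fin n → BV n :=
    fun i => if ((Sum.inr i, (0 : Fin 2)) : BV n) ∈ T0 then (Sum.inr i, 0) else (Sum.inr i, 1)
    with hf
  have hmem : ∀ i, f i ∈ T0 := by
    intro i
    by_cases h0 : ((Sum.inr i, (0 : Fin 2)) : BV n) ∈ T0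
    · simp only [hf, if_pos h0]; exact h0
    · simp only [hf, if_neg h0]; exact (key i).resolve_left h0
  have hfst : ∀ i, (f i).1 = Sum.inr i := by
    intro i
    simp only [hf]
    split <;> rfl
  have hinj : Set.InjOn f ↑(Finset.univ : Finset (Fin n)) := by
    intro a _ b _ h
    have := (hfst a).symm.trans ((congrArg Prod.fst h).trans (hfst b))
    exact Sum.inr.inj this
  calc n = (Finset.univ : Finset (Fin n)).card := (Finset.card_fin n).symm
    _ ≤ T0.card := Finset.card_le_card_of_injOn f (fun i _ => hmem i) hinj


lemma mem_image_leaf (g : Fin n → Fin 2) (i : Fin n) (t : Fin 2) :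
    ((Sum.inr i, t) : BV n) ∈ Finset.univ.image (fun j => ((Sum.inr j, g j) : BV n)) ↔
      t = g i := by
  simp only [Finset.mem_image, Finset.mem_univ, true_and]
  constructor
  · rintro ⟨j, hj⟩
    rw [Prod.ext_iff] at hj
    obtain ⟨h1, h2⟩ := hj
    obtain rfl : j = i := Sum.inr.inj h1
    exact h2.symm
  · rintro rfl
    exact ⟨i, rfl⟩

lemma center_not_mem_image_leaf (g : Fin n → Fin 2) (a : Fin 1) (t : Fin 2) :
    ((Sum.inl a, t) : BV n) ∉ Finset.univ.image (fun j => ((Sum.inr j, g j) : BV n)) := by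
  simp only [Finset.mem_image, Finset.mem_univ, true_and]
  rintro ⟨j, hj⟩
  rw [Prod.ext_iff] at hj
  exact absurd hj.1 (by simp)

lemma card_image_leaf (g : Fin n → Fin 2) :
    (Finset.univ.image (fun j => ((Sum.inr j, g j) : BV n))).card = n := by
  rw [Finset.card_image_of_injective, Finset.card_univ, Fintype.card_fin]
  intro a b h
  rw [Prod.ext_iff] at h
  exact Sum.inr.inj h.1

lemma indep_image_leaf (g : Fin n → Fin 2) :
    ∀ u ∈ Finset.univ.image (fun j => ((Sum.inr j, g j) : BV n)),
    ∀ v ∈ Finset.univ.image (fun j => ((Sum.inr j, g j) : BV n)),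
      u ≠ v → ¬ (BG n).Adj u v := by
  intro u hu v hv hne hadj
  obtain ⟨i, -, rfl⟩ := Finset.mem_image.1 hu
  obtain ⟨i', -, rfl⟩ := Finset.mem_image.1 hv
  rw [adj_ll] at hadj
  exact hne (by rw [hadj.1])

lemma full_eq (hn : 2 ≤ n) : indepDomNum (BV n) (BG n) = n := by
  classical
  haveI : NeZero n := ⟨by omega⟩
  set g : Fin n → Fin 2 := fun i => if i = 0 then 0 else 1 with hg
  set S0 : Finset (BV n) := Finset.univ.image (fun j => ((Sum.inr j, g j) : BV n)) with hS0
  refine indepDomNum_eq S0 (isIndepDomSet_of S0 (indep_image_leaf g) ?_) (card_image_leaf g) ?_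
  · intro v hv
    obtain ⟨a | i, t⟩ := v
    · fin_cases t
      · refine ⟨(Sum.inr 0, g 0), ?_, ?_⟩
        · exact Finset.mem_image_of_mem _ (Finset.mem_univ 0)
        · have : g 0 = 0 := by simp [hg]
          rw [this]
          exact adj_cl.2 rfl
      · set j1 : Fin n := ⟨1, by omega⟩ with hj1
        have hj1ne : j1 ≠ 0 := by simp [hj1, Fin.ext_iff]
        refine ⟨(Sum.inr j1, g j1), Finset.mem_image_of_mem _ (Finset.mem_univ j1), ?_⟩
        have : g j1 = 1 := by simp [hg, hj1ne]
        rw [this]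
        exact adj_cl.2 rfl
    · have ht : t ≠ g i := fun h => hv ((mem_image_leaf g i t).2 h)
      exact ⟨(Sum.inr i, g i), Finset.mem_image_of_mem _ (Finset.mem_univ i),
        adj_ll.2 ⟨rfl, ht⟩⟩
  · intro T hT
    refine card_ge_of_pairs (T0 := T) (fun i => pair_mem (s := Set.univ) ?_ ?_ trivial trivial)
    · intro u hu v hv hne
      exact hT.1 (Finset.mem_coe.2 hu) (Finset.mem_coe.2 hv) hne
    · intro v _ hv
      obtain ⟨u, hu, ha⟩ := hT.2 v (fun h => hv (Finset.mem_coe.1 h))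
      exact ⟨u, Finset.mem_coe.1 hu, ha⟩

lemma single_center_eq (hn : 2 ≤ n) (t t' : Fin 2) (htt' : t ≠ t')
    (hall : ∀ u : Fin 2, u = t ∨ u = t') :
    indepDomNum _ ((BG n).induce
      (↑(({((Sum.inl 0, t) : BV n)} : Finset (BV n))ᶜ) : Set (BV n))) = n := by
  classical
  haveI : NeZero n := ⟨by omega⟩
  set x : BV n := (Sum.inl 0, t) with hx
  set s : Set (BV n) := ↑(({x} : Finset (BV n))ᶜ) with hsdef
  have hs : ∀ v : BV n, v ∈ s ↔ v ≠ x := by intro v; simp [hsdef]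
  set g : Fin n → Fin 2 := fun i => if i = 0 then t' else t with hg
  set S0 : Finset (BV n) := Finset.univ.image (fun j => ((Sum.inr j, g j) : BV n)) with hS0
  have hsub : ∀ v ∈ S0, v ∈ s := by
    intro v hv
    obtain ⟨i, -, rfl⟩ := Finset.mem_image.1 hv
    rw [hs, hx]
    simp
  have hdom : ∀ v ∈ s, v ∉ S0 → ∃ u ∈ S0, u ∈ s ∧ (BG n).Adj v u := by
    intro v hvs hv0
    obtain ⟨a | i, u⟩ := v
    · obtain rfl : a = 0 := Subsingleton.elim _ _
      have hu : u ≠ t := by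
        intro h
        exact (hs _).1 hvs (by rw [hx, h])
      have hueq : u = t' := (hall u).resolve_left hu
      refine ⟨(Sum.inr 0, g 0), Finset.mem_image_of_mem _ (Finset.mem_univ 0),
        hsub _ (Finset.mem_image_of_mem _ (Finset.mem_univ 0)), ?_⟩
      have hg0 : g 0 = u := by simp [hg, hueq]
      rw [hg0]
      exact adj_cl.2 rfl
    · have ht : u ≠ g i := fun h => hv0 ((mem_image_leaf g i u).2 h)
      exact ⟨(Sum.inr i, g i), Finset.mem_image_of_mem _ (Finset.mem_univ i),
        hsub _ (Finset.mem_image_of_mem _ (Finset.mem_univ i)), adj_ll.2 ⟨rfl, ht⟩⟩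
  obtain ⟨S, hS, hScard⟩ := isIndepDomSet_induce S0 hsub (indep_image_leaf g) hdom
  refine indepDomNum_eq S hS (by rw [hScard, hS0, card_image_leaf]) ?_
  intro T hT
  obtain ⟨T0, hc, hsub', hind', hdom'⟩ := of_isIndepDomSet_induce T hT
  rw [← hc]
  refine card_ge_of_pairs (fun i => pair_mem hind' hdom' ?_ ?_) <;>
    · rw [hs, hx]; simp

lemma mixed_indep (E : Finset (Fin n)) {t t' : Fin 2} (htt' : t ≠ t') :
    ∀ u ∈ insert ((Sum.inl 0, t') : BV n) (E.image fun i => ((Sum.inr i, t) : BV n)),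
    ∀ v ∈ insert ((Sum.inl 0, t') : BV n) (E.image fun i => ((Sum.inr i, t) : BV n)),
      u ≠ v → ¬ (BG n).Adj u v := by
  intro u hu v hv hne hadj
  rcases Finset.mem_insert.1 hu with rfl | hu' <;> rcases Finset.mem_insert.1 hv with rfl | hv'
  · exact hne rfl
  · obtain ⟨i, -, rfl⟩ := Finset.mem_image.1 hv'
    rw [adj_cl] at hadj
    exact htt' hadj.symm
  · obtain ⟨i, -, rfl⟩ := Finset.mem_image.1 hu'
    rw [adj_lc] at hadj
    exact htt' hadj
  · obtain ⟨i, -, rfl⟩ := Finset.mem_image.1 hu'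
    obtain ⟨i', -, rfl⟩ := Finset.mem_image.1 hv'
    rw [adj_ll] at hadj
    exact hne (by rw [hadj.1])

lemma mixed_card (E : Finset (Fin n)) (t t' : Fin 2) :
    (insert ((Sum.inl 0, t') : BV n) (E.image fun i => ((Sum.inr i, t) : BV n))).card =
      E.card + 1 := by
  have hnot : ((Sum.inl 0, t') : BV n) ∉ E.image (fun i => ((Sum.inr i, t) : BV n)) := by
    simp only [Finset.mem_image]
    rintro ⟨i, -, h⟩
    rw [Prod.ext_iff] at h
    exact absurd h.1 (by simp)
  have hinj : Function.Injective (fun i : Fin n => ((Sum.inr i, t) : BV n)) := by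
    intro a b h
    rw [Prod.ext_iff] at h
    exact Sum.inr.inj h.1
  rw [Finset.card_insert_of_notMem hnot, Finset.card_image_of_injective _ hinj]

lemma mixed_mem_center (E : Finset (Fin n)) (t t' : Fin 2) (a : Fin 1) (u : Fin 2) :
    ((Sum.inl a, u) : BV n) ∈
      insert ((Sum.inl 0, t') : BV n) (E.image fun i => ((Sum.inr i, t) : BV n)) ↔ u = t' := by
  obtain rfl : a = 0 := Subsingleton.elim _ _
  simp [Prod.ext_iff]

lemma mixed_mem_leaf (E : Finset (Fin n)) (t t' : Fin 2) (i : Fin n) (u : Fin 2) :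
    ((Sum.inr i, u) : BV n) ∈
      insert ((Sum.inl 0, t') : BV n) (E.image fun i => ((Sum.inr i, t) : BV n)) ↔
      i ∈ E ∧ u = t := by
  simp only [Finset.mem_insert, Finset.mem_image, Prod.ext_iff]
  constructor
  · rintro (⟨h, -⟩ | ⟨i', hi', h1, h2⟩)
    · exact absurd h (by simp)
    · obtain rfl : i' = i := Sum.inr.inj h1
      exact ⟨hi', h2.symm⟩
  · rintro ⟨hi, rfl⟩
    exact Or.inr ⟨i, hi, rfl, rfl⟩

lemma single_leaf_eq (hn : 2 ≤ n) (j : Fin n) (t t' : Fin 2) (htt' : t ≠ t')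
    (hall : ∀ u : Fin 2, u = t ∨ u = t') :
    indepDomNum _ ((BG n).induce
      (↑(({((Sum.inr j, t) : BV n)} : Finset (BV n))ᶜ) : Set (BV n))) = n := by
  classical
  set x : BV n := (Sum.inr j, t) with hx
  set s : Set (BV n) := ↑(({x} : Finset (BV n))ᶜ) with hsdef
  have hs : ∀ v : BV n, v ∈ s ↔ v ≠ x := by intro v; simp [hsdef]
  set E : Finset (Fin n) := Finset.univ.erase j with hE
  set S0 : Finset (BV n) :=
    insert ((Sum.inl 0, t') : BV n) (E.image fun i => ((Sum.inr i, t) : BV n)) with hS0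
  have hsub : ∀ v ∈ S0, v ∈ s := by
    intro v hv
    rcases Finset.mem_insert.1 hv with rfl | hv'
    · rw [hs, hx]; simp
    · obtain ⟨i, hi, rfl⟩ := Finset.mem_image.1 hv'
      have hij : i ≠ j := (Finset.mem_erase.1 hi).1
      rw [hs, hx]
      simp [Prod.ext_iff, hij]
  have hdom : ∀ v ∈ s, v ∉ S0 → ∃ u ∈ S0, u ∈ s ∧ (BG n).Adj v u := by
    have hcmem : ((Sum.inl 0, t') : BV n) ∈ S0 := Finset.mem_insert_self _ _
    intro v hvs hv0
    obtain ⟨a | i, u⟩ := v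
    · obtain rfl : a = 0 := Subsingleton.elim _ _
      have hu : u ≠ t' := fun h => hv0 ((mixed_mem_center E t t' 0 u).2 h)
      have hueq : u = t := (hall u).resolve_right hu
      refine ⟨_, hcmem, hsub _ hcmem, ?_⟩
      exact adj_cc.2 (by rw [hueq]; exact htt')
    · by_cases hu : u = t
      · exfalso
        have hiE : i ∉ E := fun hi => hv0 ((mixed_mem_leaf E t t' i u).2 ⟨hi, hu⟩)
        have hij : i = j := by
          by_contra hij
          exact hiE (Finset.mem_erase.2 ⟨hij, Finset.mem_univ i⟩)
        exact (hs _).1 hvs (by rw [hx, hij, hu])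
      · have hueq : u = t' := (hall u).resolve_left hu
        exact ⟨_, hcmem, hsub _ hcmem, adj_lc.2 hueq⟩
  obtain ⟨S, hS, hScard⟩ := isIndepDomSet_induce S0 hsub (mixed_indep E htt') hdom
  have hcard : S.card = n := by
    rw [hScard, hS0, mixed_card, hE, Finset.card_erase_of_mem (Finset.mem_univ j),
      Finset.card_univ, Fintype.card_fin]
    omega
  refine indepDomNum_eq S hS hcard ?_
  intro T hT
  obtain ⟨T0, hc, hsub', hind', hdom'⟩ := of_isIndepDomSet_induce T hT
  rw [← hc]
  have key : ∀ i : Fin n, i ≠ j →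
      ((Sum.inr i, (0 : Fin 2)) : BV n) ∈ T0 ∨ ((Sum.inr i, (1 : Fin 2)) : BV n) ∈ T0 := by
    intro i hij
    refine pair_mem hind' hdom' ?_ ?_ <;>
      · rw [hs, hx]; simp [Prod.ext_iff, hij]
  have extra : ((Sum.inr j, t') : BV n) ∈ T0 ∨ ((Sum.inl 0, t') : BV n) ∈ T0 := by
    by_cases h : ((Sum.inr j, t') : BV n) ∈ T0
    · exact Or.inl h
    right
    have hmem : ((Sum.inr j, t') : BV n) ∈ s := by
      rw [hs, hx]
      simp [Prod.ext_iff, htt'.symm]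
    obtain ⟨u, huT, hadj⟩ := hdom' _ hmem h
    obtain ⟨a | j', t''⟩ := u
    · rw [adj_lc] at hadj
      obtain rfl : a = 0 := Subsingleton.elim _ _
      rwa [← hadj] at huT
    · rw [adj_ll] at hadj
      obtain ⟨h1, hne⟩ := hadj
      have h2 : t'' = t := (hall t'').resolve_right (fun h' => hne h'.symm)
      have hmem2 : ((Sum.inr j', t'') : BV n) ∈ s := hsub' _ huT
      rw [hs, hx] at hmem2
      exact absurd (by rw [← h1, h2] : ((Sum.inr j', t'') : BV n) = x) hmem2
  set f : Fin n → BV n := fun i =>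
    if i = j then
      (if ((Sum.inr j, t') : BV n) ∈ T0 then (Sum.inr j, t') else (Sum.inl 0, t'))
    else
      (if ((Sum.inr i, (0 : Fin 2)) : BV n) ∈ T0 then (Sum.inr i, 0) else (Sum.inr i, 1))
    with hfdef
  have hmem : ∀ i, f i ∈ T0 := by
    intro i
    by_cases hij : i = j
    · subst hij
      by_cases h : ((Sum.inr i, t') : BV n) ∈ T0
      · simp only [hfdef, if_pos rfl, if_pos h]
        exact h
      · simp only [hfdef, if_pos rfl, if_neg h]
        exact extra.resolve_left h
    · by_cases h0 : ((Sum.inr i, (0 : Fin 2)) : BV n) ∈ T0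
      · simp only [hfdef, if_neg hij, if_pos h0]
        exact h0
      · simp only [hfdef, if_neg hij, if_neg h0]
        exact (key i hij).resolve_left h0
  have hfst : ∀ i, i ≠ j → (f i).1 = Sum.inr i := by
    intro i hij
    simp only [hfdef, if_neg hij]
    split <;> rfl
  have hfj : (f j).1 = Sum.inr j ∨ (f j).1 = Sum.inl 0 := by
    simp only [hfdef, if_pos rfl]
    split
    · exact Or.inl rfl
    · exact Or.inr rfl
  have hinj : Set.InjOn f ↑(Finset.univ : Finset (Fin n)) := by
    intro a _ b _ h
    have hh : (f a).1 = (f b).1 := congrArg Prod.fst h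
    by_cases ha : a = j <;> by_cases hb : b = j
    · rw [ha, hb]
    · exfalso
      rw [ha, hfst b hb] at hh
      rcases hfj with h1 | h1 <;> rw [h1] at hh
      · exact hb (Sum.inr.inj hh).symm
      · exact absurd hh (by simp)
    · exfalso
      rw [hb, hfst a ha] at hh
      rcases hfj with h1 | h1 <;> rw [h1] at hh
      · exact ha (Sum.inr.inj hh)
      · exact absurd hh (by simp)
    · rw [hfst a ha, hfst b hb] at hh
      exact Sum.inr.inj hh
  calc n = (Finset.univ : Finset (Fin n)).card := (Finset.card_fin n).symm
    _ ≤ T0.card := Finset.card_le_card_of_injOn f (fun i _ => hmem i) hinj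

lemma double_le (hn : 2 ≤ n) {z0 z1 : Fin n} (hz : z0 ≠ z1) :
    indepDomNum _ ((BG n).induce
      (↑((({(Sum.inr z0, 0), (Sum.inr z1, 0)} : Finset (BV n)))ᶜ) : Set (BV n))) ≤ n - 1 := by
  classical
  set A : Finset (BV n) := {(Sum.inr z0, 0), (Sum.inr z1, 0)} with hA
  set s : Set (BV n) := ↑(Aᶜ) with hsdef
  have hs : ∀ v : BV n, v ∈ s ↔ v ≠ (Sum.inr z0, 0) ∧ v ≠ (Sum.inr z1, 0) := by
    intro v
    simp only [hsdef, hA, Finset.coe_compl, Set.mem_compl_iff, Finset.coe_insert,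
      Set.mem_insert_iff, Finset.coe_singleton, Set.mem_singleton_iff, not_or]
  set E : Finset (Fin n) := (Finset.univ.erase z0).erase z1 with hE
  have hEmem : ∀ i : Fin n, i ∈ E ↔ i ≠ z1 ∧ i ≠ z0 := by
    intro i
    simp [hE]
  set S0 : Finset (BV n) :=
    insert ((Sum.inl 0, (1 : Fin 2)) : BV n)
      (E.image fun i => ((Sum.inr i, (0 : Fin 2)) : BV n)) with hS0
  have hsub : ∀ v ∈ S0, v ∈ s := by
    intro v hv
    rcases Finset.mem_insert.1 hv with rfl | hv'
    · rw [hs]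
      constructor <;> simp
    · obtain ⟨i, hi, rfl⟩ := Finset.mem_image.1 hv'
      rw [hEmem] at hi
      rw [hs]
      constructor <;> simp [Prod.ext_iff, hi.1, hi.2]
  have hdom : ∀ v ∈ s, v ∉ S0 → ∃ u ∈ S0, u ∈ s ∧ (BG n).Adj v u := by
    have hcmem : ((Sum.inl 0, (1 : Fin 2)) : BV n) ∈ S0 := Finset.mem_insert_self _ _
    intro v hvs hv0
    obtain ⟨a | i, u⟩ := v
    · obtain rfl : a = 0 := Subsingleton.elim _ _
      have hu : u ≠ 1 := fun h => hv0 ((mixed_mem_center E 0 1 0 u).2 h)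
      have hueq : u = 0 := ((by decide : ∀ w : Fin 2, w = 0 ∨ w = 1) u).resolve_right hu
      refine ⟨_, hcmem, hsub _ hcmem, adj_cc.2 ?_⟩
      rw [hueq]
      decide
    · by_cases hu : u = 0
      · exfalso
        have hiE : i ∉ E := fun hi => hv0 ((mixed_mem_leaf E 0 1 i u).2 ⟨hi, hu⟩)
        rw [hEmem] at hiE
        push_neg at hiE
        rw [hs] at hvs
        by_cases h1 : i = z1
        · exact hvs.2 (by rw [h1, hu])
        · exact hvs.1 (by rw [hiE h1, hu])
      · have hueq : u = 1 := ((by decide : ∀ w : Fin 2, w = 0 ∨ w = 1) u).resolve_left hu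
        exact ⟨_, hcmem, hsub _ hcmem, adj_lc.2 hueq⟩
  obtain ⟨S, hS, hScard⟩ := isIndepDomSet_induce S0 hsub (mixed_indep E (by decide)) hdom
  refine indepDomNum_le S hS ?_
  rw [hScard, hS0, mixed_card, hE,
    Finset.card_erase_of_mem (Finset.mem_erase.2 ⟨hz.symm, Finset.mem_univ z1⟩),
    Finset.card_erase_of_mem (Finset.mem_univ z0), Finset.card_univ, Fintype.card_fin]
  omega

end BookAux

open BookAux in
/-- The independent domination stability of the book graph
`B_n = K_{1,n} □ P_2` equals 2. -/
theorem stmt7 (n : ℕ) (hn : 2 ≤ n) :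
    idStability _ ((completeBipartiteGraph (Fin 1) (Fin n)) □ (pathGraph 2)) = 2 := by
  classical
  haveI : NeZero n := ⟨by omega⟩
  have hfull := full_eq hn
  set z0 : Fin n := ⟨0, by omega⟩ with hz0
  set z1 : Fin n := ⟨1, by omega⟩ with hz1
  have hz : z0 ≠ z1 := by simp [hz0, hz1, Fin.ext_iff]
  set A : Finset (BV n) := {(Sum.inr z0, 0), (Sum.inr z1, 0)} with hA
  have hAcard : A.card = 2 := by
    rw [hA, Finset.card_insert_of_notMem (by simp [Prod.ext_iff, hz]), Finset.card_singleton]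
  have hchanged : indepDomNum _ ((BG n).induce (↑(Aᶜ) : Set (BV n))) ≠
      indepDomNum _ (BG n) := by
    have hle := double_le hn hz
    rw [hfull]
    intro heq
    rw [hA] at heq
    rw [heq] at hle
    omega
  have h2mem : (2 : ℕ) ∈ {k | ∃ A : Finset (BV n), A.card = k ∧ A.Nonempty ∧
      indepDomNum _ ((BG n).induce (↑(Aᶜ) : Set (BV n))) ≠ indepDomNum _ (BG n)} :=
    ⟨A, hAcard, ⟨_, Finset.mem_insert_self _ _⟩, hchanged⟩
  refine le_antisymm (Nat.sInf_le h2mem) (le_csInf ⟨2, h2mem⟩ ?_)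
  rintro k ⟨B, hBcard, hBne, hBdiff⟩
  by_contra hk
  push_neg at hk
  interval_cases k
  · exact absurd (Finset.card_eq_zero.1 hBcard) (Finset.nonempty_iff_ne_empty.1 hBne)
  · obtain ⟨x, rfl⟩ := Finset.card_eq_one.1 hBcard
    apply hBdiff
    rw [hfull]
    obtain ⟨a | j, t⟩ := x
    · obtain rfl : a = 0 := Subsingleton.elim _ _
      fin_cases t
      · exact single_center_eq hn 0 1 (by decide) (by decide)
      · exact single_center_eq hn 1 0 (by decide) (by decide)
    · fin_cases t
      · exact single_leaf_eq hn j 0 1 (by decide) (by decide)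
      · exact single_leaf_eq hn j 1 0 (by decide) (by decide)
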